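/- arXiv:1411.4577 — 2 statements merged into one kernel-verified Lean document; each statement's English description precedes it below -/
import Mathlib

section
/- Let m ≥ 1, r ≥ 1, and k : Fin m → ℕ with 2r+1 ≤ k(i) for all i. Let T be the m-dimensional r-nearest neighbor torus, i.e., the simple graph on Π_{i} ZMod (k(i)) in which x and y are adjacent iff there is an index i with x(l) = y(l) for all l ≠ i and x(i), y(i) adjacent in C_{k(i)}^r. Then for every choice of j : Fin m → ℕ with 1 ≤ j(i) ≤ k(i)−1 for all i, the vector v(x) = exp(2πi·∑_{i} j(i)·x(i)/k(i)) is an eigenvector of the Laplacian matrix of T with eigenvalue (2r+1)m − ∑_{i=1}^{m} sin((2r+1)πj(i)/k(i)) / sin(πj(i)/k(i)). -/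
open Real Complex SimpleGraph Matrix Finset

/-- The `r`-nearest neighbor cycle `C_n^r` on `ZMod n`: distinct vertices `a, b` are adjacent
iff `a - b ≡ s (mod n)` for some `s ∈ {1,…,r} ∪ {n-r,…,n-1}`, i.e. iff `a - b = s` or
`b - a = s` in `ZMod n` for some `1 ≤ s ≤ r`. -/
def nnCycle (n r : ℕ) : SimpleGraph (ZMod n) where
  Adj a b := a ≠ b ∧ ∃ s ∈ Finset.Icc 1 r, a - b = (s : ZMod n) ∨ b - a = (s : ZMod n)
  symm := by
    constructor
    rintro a b ⟨hne, s, hs, h⟩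
    exact ⟨hne.symm, s, hs, h.symm⟩
  loopless := by constructor; rintro a ⟨h, -⟩; exact h rfl

instance nnCycle.adjDecidable (n r : ℕ) : DecidableRel (nnCycle n r).Adj := fun a b =>
  inferInstanceAs (Decidable (a ≠ b ∧ ∃ s ∈ Finset.Icc 1 r,
    a - b = (s : ZMod n) ∨ b - a = (s : ZMod n)))

/-- The `m`-dimensional `r`-nearest neighbor torus: the `m`-fold Cartesian (box) product of
the cycles `C_{k i}^r`. Two tuples are adjacent iff they agree in all but one coordinate and
differ in that coordinate by an edge of the corresponding cycle. -/
def nnTorus (m r : ℕ) (k : Fin m → ℕ) : SimpleGraph ((i : Fin m) → ZMod (k i)) where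
  Adj x y := ∃ i, (∀ l, l ≠ i → x l = y l) ∧ (nnCycle (k i) r).Adj (x i) (y i)
  symm := by
    constructor
    rintro x y ⟨i, h1, h2⟩
    exact ⟨i, fun l hl => (h1 l hl).symm, h2.symm⟩
  loopless := by
    constructor
    rintro x ⟨i, -, h2⟩
    exact h2.ne rfl

instance nnTorus.adjDecidable (m r : ℕ) (k : Fin m → ℕ) :
    DecidableRel (nnTorus m r k).Adj := fun x y =>
  inferInstanceAs (Decidable (∃ i, (∀ l, l ≠ i → x l = y l) ∧
    (nnCycle (k i) r).Adj (x i) (y i)))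

lemma dirichlet_kernel (θ : ℝ) (r : ℕ) :
    Real.sin θ * (1 + 2 * ∑ s ∈ Finset.Icc 1 r, Real.cos (2 * s * θ)) =
      Real.sin ((2 * r + 1) * θ) := by
  induction r with
  | zero => norm_num
  | succ n ih =>
    rw [Finset.sum_Icc_succ_top (by omega : 1 ≤ n + 1)]
    have key : Real.sin (2 * ((n:ℝ)+1) * θ + θ) - Real.sin (2 * ((n:ℝ)+1) * θ - θ)
        = 2 * Real.cos (2 * ((n:ℝ)+1) * θ) * Real.sin θ := by
      rw [Real.sin_add, Real.sin_sub]; ring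
    have e2 : (2 * (n:ℕ) + 1 : ℝ) * θ = 2 * ((n:ℝ)+1) * θ - θ := by push_cast; ring
    push_cast
    push_cast at ih e2
    rw [show ((2:ℝ) * (↑n + 1) + 1) * θ = 2 * ((n:ℝ)+1) * θ + θ by ring]
    rw [e2] at ih
    nlinarith [key, ih]

lemma chi_hom (n : ℕ) (hn : n ≠ 0) (c : ℕ) (a b : ZMod n) :
    Complex.exp (2 * Real.pi * Complex.I * ((c:ℂ) * (((a+b).val : ℕ) : ℂ) / (n:ℂ))) =
    Complex.exp (2 * Real.pi * Complex.I * ((c:ℂ) * ((a.val : ℕ) : ℂ) / (n:ℂ))) *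
    Complex.exp (2 * Real.pi * Complex.I * ((c:ℂ) * ((b.val : ℕ) : ℂ) / (n:ℂ))) := by
  haveI : NeZero n := ⟨hn⟩
  rw [← Complex.exp_add]
  set t : ℕ := (a.val + b.val) / n with ht
  have hval : a.val + b.val = (a + b).val + n * t := by
    rw [ZMod.val_add, ht]; exact (Nat.mod_add_div _ _).symm
  have hn' : (n:ℂ) ≠ 0 := Nat.cast_ne_zero.mpr hn
  have hvc : ((a.val : ℂ)) + (b.val : ℂ) = (((a+b).val : ℕ) : ℂ) + (n:ℂ) * (t:ℂ) := by
    exact_mod_cast congrArg (Nat.cast (R := ℂ)) hval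
  have harg : 2 * Real.pi * Complex.I * ((c:ℂ) * ((a.val:ℕ) : ℂ) / (n:ℂ)) +
      2 * Real.pi * Complex.I * ((c:ℂ) * ((b.val:ℕ) : ℂ) / (n:ℂ)) =
      2 * Real.pi * Complex.I * ((c:ℂ) * (((a+b).val:ℕ) : ℂ) / (n:ℂ)) +
      ((c * t : ℤ) : ℂ) * (2 * Real.pi * Complex.I) := by
    field_simp
    push_cast
    linear_combination (c:ℂ) * hvc
  rw [harg, Complex.exp_add, Complex.exp_int_mul_two_pi_mul_I, mul_one]

lemma chi_pair (n : ℕ) (hn : n ≠ 0) (c s : ℕ) (hs1 : 1 ≤ s) (hsn : s < n) :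
    Complex.exp (2 * Real.pi * Complex.I * ((c:ℂ) * ((((s : ZMod n)).val : ℕ) : ℂ) / (n:ℂ))) +
    Complex.exp (2 * Real.pi * Complex.I * ((c:ℂ) * ((((-(s : ZMod n))).val : ℕ) : ℂ) / (n:ℂ))) =
    ((2 * Real.cos (2 * (s:ℝ) * (Real.pi * (c:ℝ) / (n:ℝ))) : ℝ) : ℂ) := by
  haveI : NeZero n := ⟨hn⟩
  have hs0 : (s : ZMod n) ≠ 0 := by
    rw [Ne, ZMod.natCast_eq_zero_iff]
    intro h; exact absurd (Nat.le_of_dvd (by omega) h) (by omega)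
  haveI : NeZero ((s : ZMod n)) := ⟨hs0⟩
  rw [ZMod.val_neg_of_ne_zero, ZMod.val_natCast_of_lt hsn]
  have hn' : (n:ℝ) ≠ 0 := Nat.cast_ne_zero.mpr hn
  have hnc : (n:ℂ) ≠ 0 := Nat.cast_ne_zero.mpr hn
  set α : ℝ := 2 * (s:ℝ) * (Real.pi * (c:ℝ) / (n:ℝ)) with hα
  have h1 : 2 * Real.pi * Complex.I * ((c:ℂ) * ((s:ℕ) : ℂ) / (n:ℂ)) = (α:ℝ) * Complex.I := by
    rw [hα]
    push_cast
    field_simp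
  have h2 : 2 * Real.pi * Complex.I * ((c:ℂ) * (((n - s:ℕ)) : ℂ) / (n:ℂ)) =
      -((α:ℝ) * Complex.I) + ((c:ℤ) : ℂ) * (2 * Real.pi * Complex.I) := by
    have : ((n - s : ℕ) : ℂ) = (n:ℂ) - (s:ℂ) := by
      push_cast [Nat.cast_sub (le_of_lt hsn)]; ring
    rw [this, hα]
    push_cast
    field_simp
    ring_nf
  rw [h1, h2, Complex.exp_add, Complex.exp_int_mul_two_pi_mul_I, mul_one]
  rw [show -((α:ℝ) * Complex.I) = (-α : ℝ) * Complex.I by push_cast; ring]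
  rw [Complex.exp_mul_I, Complex.exp_mul_I]
  push_cast
  rw [Complex.cos_neg, Complex.sin_neg]
  ring

/-- For the `m`-dimensional `r`-nearest neighbor torus with `2r+1 ≤ k i` and indices
`1 ≤ j i ≤ k i - 1`, the vector `v(x) = exp(2πi·∑ᵢ jᵢxᵢ/kᵢ)` is an eigenvector of the
Laplacian with eigenvalue `(2r+1)m - ∑ᵢ sin((2r+1)πjᵢ/kᵢ)/sin(πjᵢ/kᵢ)`. -/
theorem multitorus_laplacian_eigenvector (m r : ℕ) (hm : 1 ≤ m) (hr : 1 ≤ r)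
    (k : Fin m → ℕ) (hk : ∀ i, 2 * r + 1 ≤ k i)
    (j : Fin m → ℕ) (hjl : ∀ i, 1 ≤ j i) (hj : ∀ i, j i ≤ k i - 1) :
    haveI : ∀ i, NeZero (k i) := fun i => ⟨by have := hk i; omega⟩
    (nnTorus m r k).lapMatrix ℂ *ᵥ
        (fun x => Complex.exp (2 * Real.pi * Complex.I *
          ∑ i, (j i : ℂ) * ((x i).val : ℂ) / (k i : ℂ))) =
      (((2 * r + 1) * m - ∑ i, Real.sin ((2 * r + 1) * Real.pi * j i / k i) /
          Real.sin (Real.pi * j i / k i) : ℝ) : ℂ) •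
        (fun x => Complex.exp (2 * Real.pi * Complex.I *
          ∑ i, (j i : ℂ) * ((x i).val : ℂ) / (k i : ℂ))) := by
  haveI inst : ∀ i, NeZero (k i) := fun i => ⟨by have := hk i; omega⟩
  set v : ((i : Fin m) → ZMod (k i)) → ℂ := fun x =>
    Complex.exp (2 * Real.pi * Complex.I *
      ∑ i, (j i : ℂ) * ((x i).val : ℂ) / (k i : ℂ)) with hvdef
  set χ : (i : Fin m) → ZMod (k i) → ℂ := fun i a =>
    Complex.exp (2 * Real.pi * Complex.I * ((j i : ℂ) * ((a.val : ℕ) : ℂ) / (k i : ℂ)))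
    with hχdef
  have hk0 : ∀ i, k i ≠ 0 := fun i => (inst i).out
  have hvprod : ∀ x, v x = ∏ i, χ i (x i) := by
    intro x
    rw [hvdef]
    simp only
    rw [← Complex.exp_sum]
    congr 1
    rw [Finset.mul_sum]
  have hupd : ∀ (x : (i : Fin m) → ZMod (k i)) (i : Fin m) (c : ZMod (k i)),
      v (Function.update x i (x i + c)) = χ i c * v x := by
    intro x i c
    rw [hvprod, hvprod]
    rw [← Finset.mul_prod_erase _ (fun l => χ l (Function.update x i (x i + c) l))
      (Finset.mem_univ i)]
    rw [← Finset.mul_prod_erase _ (fun l => χ l (x l)) (Finset.mem_univ i)]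
    have h1 : ∏ l ∈ Finset.univ.erase i, χ l (Function.update x i (x i + c) l)
        = ∏ l ∈ Finset.univ.erase i, χ l (x l) := by
      refine Finset.prod_congr rfl fun l hl => ?_
      rw [Function.update_of_ne (Finset.mem_erase.mp hl).1]
    rw [h1, Function.update_self]
    have h2 : χ i (x i + c) = χ i (x i) * χ i c := by
      rw [hχdef]; exact chi_hom (k i) (hk0 i) (j i) (x i) c
    rw [h2]; ring
  have hcast_ne : ∀ (i : Fin m) (s : ℕ), 1 ≤ s → s ≤ 2 * r → (s : ZMod (k i)) ≠ 0 := by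
    intro i s h1 h2
    rw [Ne, ZMod.natCast_eq_zero_iff]
    intro h
    have h3 := Nat.le_of_dvd (by omega) h
    have := hk i; omega
  have hvalc : ∀ (i : Fin m) (s : ℕ), s ≤ 2 * r → ((s : ZMod (k i))).val = s := by
    intro i s h2
    exact ZMod.val_natCast_of_lt (by have := hk i; omega)
  funext x
  rw [SimpleGraph.lapMatrix_mulVec_apply]
  -- the neighbor parametrization
  set δ : (i : Fin m) → ℕ → Bool → ZMod (k i) := fun i s b =>
    (if b then ((s : ZMod (k i))) else -(s : ZMod (k i))) with hδdef
  set F : Fin m × ℕ × Bool → ((i : Fin m) → ZMod (k i)) := fun p =>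
    Function.update x p.1 (x p.1 + δ p.1 p.2.1 p.2.2) with hFdef
  set S : Finset (Fin m × ℕ × Bool) :=
    Finset.univ ×ˢ (Finset.Icc 1 r ×ˢ Finset.univ) with hSdef
  have hδne : ∀ (i : Fin m) (s : ℕ) (b : Bool), 1 ≤ s → s ≤ r → δ i s b ≠ 0 := by
    intro i s b h1 h2
    cases b
    · show -(s : ZMod (k i)) ≠ 0
      rw [Ne, neg_eq_zero]
      exact hcast_ne i s h1 (by omega)
    · show (s : ZMod (k i)) ≠ 0
      exact hcast_ne i s h1 (by omega)
  have hmemS : ∀ (i : Fin m) (s : ℕ) (b : Bool), (i, s, b) ∈ S ↔ 1 ≤ s ∧ s ≤ r := by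
    intro i s b
    simp [hSdef, Finset.mem_product, Finset.mem_Icc]
  have himg : (nnTorus m r k).neighborFinset x = S.image F := by
    ext y
    rw [SimpleGraph.mem_neighborFinset, Finset.mem_image]
    constructor
    · rintro ⟨i, h1, hne, s, hs, hcase⟩
      rw [Finset.mem_Icc] at hs
      rcases hcase with h | h
      · refine ⟨(i, s, false), (hmemS i s false).mpr hs, ?_⟩
        funext l
        by_cases hl : l = i
        · subst hl
          rw [hFdef]
          simp only
          rw [Function.update_self, hδdef]
          simp only [Bool.false_eq_true, if_false]
          rw [← h]; ring
        · rw [hFdef]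
          simp only
          rw [Function.update_of_ne hl]
          exact (h1 l hl)
      · refine ⟨(i, s, true), (hmemS i s true).mpr hs, ?_⟩
        funext l
        by_cases hl : l = i
        · subst hl
          rw [hFdef]
          simp only
          rw [Function.update_self, hδdef]
          simp only [if_true]
          rw [← h]; ring
        · rw [hFdef]
          simp only
          rw [Function.update_of_ne hl]
          exact (h1 l hl)
    · rintro ⟨⟨i, s, b⟩, hp, rfl⟩
      rw [hmemS i s b] at hp
      refine ⟨i, fun l hl => ?_, ?_, ⟨s, Finset.mem_Icc.mpr hp, ?_⟩⟩
      · rw [hFdef]; simp only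
        rw [Function.update_of_ne hl]
      · rw [hFdef]; simp only
        rw [Function.update_self]
        intro hcontra
        exact hδne i s b hp.1 hp.2 (by linear_combination -hcontra)
      · rw [hFdef]; simp only
        rw [Function.update_self, hδdef]
        cases b
        · left; simp only [Bool.false_eq_true, if_false]; ring
        · right; simp only [if_true]; ring
  have hinj : Set.InjOn F S := by
    rintro ⟨i, s, b⟩ hp ⟨i', s', b'⟩ hp' heq
    rw [Finset.mem_coe, hmemS i s b] at hp
    rw [Finset.mem_coe, hmemS i' s' b'] at hp'
    have hii : i = i' := by
      by_contra hne
      have h1 := congrFun heq i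
      rw [hFdef] at h1
      simp only at h1
      rw [Function.update_self, Function.update_of_ne (fun h => hne h)] at h1
      exact hδne i s b hp.1 hp.2 (by linear_combination h1)
    subst hii
    have h1 := congrFun heq i
    rw [hFdef] at h1
    simp only at h1
    rw [Function.update_self, Function.update_self] at h1
    have hδδ : δ i s b = δ i s' b' := by linear_combination h1
    have hvs : ∀ s₀ : ℕ, 1 ≤ s₀ → s₀ ≤ r → ((s₀ : ZMod (k i))).val = s₀ :=
      fun s₀ _ h2 => hvalc i s₀ (by omega)
    rw [hδdef] at hδδ
    cases b <;> cases b' <;> simp only [if_true, if_false, Bool.false_eq_true] at hδδ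
    · -- both false : -s = -s'
      have : (s : ZMod (k i)) = (s' : ZMod (k i)) := neg_injective hδδ
      have := congrArg ZMod.val this
      rw [hvs s hp.1 hp.2, hvs s' hp'.1 hp'.2] at this
      simp [this]
    · -- b = false, b' = true : -s = s'
      exfalso
      have hsum0 : ((s + s' : ℕ) : ZMod (k i)) = 0 := by
        push_cast
        linear_combination -hδδ
      exact hcast_ne i (s + s') (by omega) (by omega) hsum0
    · -- b = true, b' = false : s = -s'
      exfalso
      have hsum0 : ((s + s' : ℕ) : ZMod (k i)) = 0 := by
        push_cast
        linear_combination hδδ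
      exact hcast_ne i (s + s') (by omega) (by omega) hsum0
    · -- both true
      have := congrArg ZMod.val hδδ
      rw [hvs s hp.1 hp.2, hvs s' hp'.1 hp'.2] at this
      simp [this]
  have hdeg : (nnTorus m r k).degree x = 2 * r * m := by
    rw [← SimpleGraph.card_neighborFinset_eq_degree, himg,
      Finset.card_image_of_injOn hinj, hSdef]
    rw [Finset.card_product, Finset.card_product]
    simp [Nat.card_Icc]
    ring
  have hsum : ∑ u ∈ (nnTorus m r k).neighborFinset x, v u =
      (∑ i, ∑ s ∈ Finset.Icc 1 r,
        ((2 * Real.cos (2 * (s:ℝ) * (Real.pi * (j i:ℝ) / (k i:ℝ))) : ℝ) : ℂ)) * v x := by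
    rw [himg, Finset.sum_image hinj, hSdef]
    rw [Finset.sum_product]
    rw [Finset.sum_mul]
    refine Finset.sum_congr rfl fun i _ => ?_
    rw [Finset.sum_product, Finset.sum_mul]
    refine Finset.sum_congr rfl fun s hs => ?_
    rw [Finset.mem_Icc] at hs
    rw [Fintype.sum_bool]
    have ht : F (i, s, true) = Function.update x i (x i + (s : ZMod (k i))) := by
      rw [hFdef]; simp [hδdef]
    have hf : F (i, s, false) = Function.update x i (x i + -(s : ZMod (k i))) := by
      rw [hFdef]; simp [hδdef]
    rw [ht, hf, hupd, hupd]
    have hpair := chi_pair (k i) (hk0 i) (j i) s hs.1 (by have := hk i; omega)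
    rw [hχdef]
    simp only
    rw [← add_mul, hpair]
  rw [hdeg, hsum]
  rw [Pi.smul_apply, smul_eq_mul]
  have hscal : ((2 * r * m : ℕ) : ℂ) -
      (∑ i, ∑ s ∈ Finset.Icc 1 r,
        ((2 * Real.cos (2 * (s:ℝ) * (Real.pi * (j i:ℝ) / (k i:ℝ))) : ℝ) : ℂ)) =
      ((((2 * (r:ℝ) + 1) * (m:ℝ) - ∑ i, Real.sin ((2 * (r:ℝ) + 1) * Real.pi * (j i:ℝ) / (k i:ℝ)) /
          Real.sin (Real.pi * (j i:ℝ) / (k i:ℝ))) : ℝ) : ℂ) := by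
    have hcs : (∑ i, ∑ s ∈ Finset.Icc 1 r,
        ((2 * Real.cos (2 * (s:ℝ) * (Real.pi * (j i:ℝ) / (k i:ℝ))) : ℝ) : ℂ))
        = (((∑ i, ∑ s ∈ Finset.Icc 1 r,
            2 * Real.cos (2 * (s:ℝ) * (Real.pi * (j i:ℝ) / (k i:ℝ)))) : ℝ) : ℂ) := by
      push_cast; rfl
    rw [hcs, show ((2 * r * m : ℕ) : ℂ) = (((2 * r * m : ℕ) : ℝ) : ℂ) from by norm_cast,
      ← Complex.ofReal_sub]
    congr 1
    have hθ : ∀ i : Fin m, Real.sin ((2 * (r:ℝ) + 1) * Real.pi * (j i:ℝ) / (k i:ℝ)) /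
        Real.sin (Real.pi * (j i:ℝ) / (k i:ℝ)) =
        1 + 2 * ∑ s ∈ Finset.Icc 1 r, Real.cos (2 * (s:ℝ) * (Real.pi * (j i:ℝ) / (k i:ℝ))) := by
      intro i
      have hki : (0:ℝ) < (k i : ℝ) := by
        have := hk i
        exact_mod_cast Nat.pos_of_ne_zero (hk0 i)
      have hji : (0:ℝ) < (j i : ℝ) := by exact_mod_cast hjl i
      have hθpos : 0 < Real.pi * (j i:ℝ) / (k i:ℝ) := by positivity
      have hθlt : Real.pi * (j i:ℝ) / (k i:ℝ) < Real.pi := by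
        rw [div_lt_iff₀ hki]
        have hjk : (j i : ℝ) < (k i : ℝ) := by
          have h1 := hj i
          have h2 := hk i
          exact_mod_cast (by omega : j i < k i)
        nlinarith [Real.pi_pos]
      have hsin : Real.sin (Real.pi * (j i:ℝ) / (k i:ℝ)) ≠ 0 :=
        ne_of_gt (Real.sin_pos_of_pos_of_lt_pi hθpos hθlt)
      rw [div_eq_iff hsin]
      have hd := dirichlet_kernel (Real.pi * (j i:ℝ) / (k i:ℝ)) r
      rw [show (2 * (r:ℝ) + 1) * Real.pi * (j i:ℝ) / (k i:ℝ)
          = (2 * (r:ℝ) + 1) * (Real.pi * (j i:ℝ) / (k i:ℝ)) from by ring]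
      linarith [hd]
    rw [Finset.sum_congr rfl fun i _ => hθ i]
    rw [Finset.sum_add_distrib, Finset.sum_const, Finset.card_univ, Fintype.card_fin]
    have hswap : ∀ i : Fin m, (2:ℝ) * ∑ s ∈ Finset.Icc 1 r,
        Real.cos (2 * (s:ℝ) * (Real.pi * (j i:ℝ) / (k i:ℝ)))
        = ∑ s ∈ Finset.Icc 1 r, 2 * Real.cos (2 * (s:ℝ) * (Real.pi * (j i:ℝ) / (k i:ℝ))) :=
      fun i => Finset.mul_sum _ _ _
    rw [Finset.sum_congr rfl fun i _ => hswap i]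
    push_cast
    ring
  linear_combination v x * hscal
end

section
/- Let r ≥ 1 and let k₁, k₂ be even integers with 2r+1 ≤ k₁ and 2r+1 ≤ k₂. The vector w : ZMod k₁ × ZMod k₂ → ℂ defined by w(x,y) = (−1)^{x+y} (well defined since k₁ and k₂ are even) is an eigenvector of the Laplacian matrix of the r-nearest neighbor torus T^r_{k₁,k₂} = C_{k₁}^r □ C_{k₂}^r with eigenvalue 4r + 2 − 2(−1)^r = 4r + 2 − 2cos(πr). -/
open Real Complex SimpleGraph Matrix Finset

instance boxProd.adjDecidable {α β : Type*} [DecidableEq α] [DecidableEq β]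
    (G : SimpleGraph α) (H : SimpleGraph β) [DecidableRel G.Adj] [DecidableRel H.Adj] :
    DecidableRel (G □ H).Adj := fun x y =>
  inferInstanceAs (Decidable (G.Adj x.1 y.1 ∧ x.2 = y.2 ∨ H.Adj x.2 y.2 ∧ x.1 = y.1))

lemma neg_one_pow_mod_two (n : ℕ) : (-1 : ℂ) ^ n = (-1) ^ (n % 2) := by
  conv_lhs => rw [← Nat.div_add_mod n 2]
  rw [pow_add, pow_mul]
  simp

lemma sum_neg_one_pow (r : ℕ) :
    ∑ s ∈ Finset.Icc 1 r, (-1 : ℂ) ^ s = ((-1) ^ r - 1) / 2 := by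
  induction r with
  | zero => simp
  | succ n ih =>
      rw [Finset.sum_Icc_succ_top (by omega), ih, pow_succ]
      ring

lemma nnCycle_cast_ne_zero {k : ℕ} [NeZero k] {s : ℕ} (h1 : 1 ≤ s) (h2 : s < k) :
    (s : ZMod k) ≠ 0 := by
  intro hc
  have := ZMod.val_cast_of_lt h2
  rw [hc, ZMod.val_zero] at this
  omega

lemma nnCycle_neighborFinset (k r : ℕ) [NeZero k] (hr : 1 ≤ r) (h : 2 * r + 1 ≤ k)
    (a : ZMod k) :
    (nnCycle k r).neighborFinset a =
      (Finset.Icc 1 r).image (fun s : ℕ => a + (s : ZMod k)) ∪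
        (Finset.Icc 1 r).image (fun s : ℕ => a - (s : ZMod k)) := by
  ext b
  simp only [mem_neighborFinset, Finset.mem_union, Finset.mem_image]
  constructor
  · rintro ⟨hne, s, hs, hc | hc⟩
    · right
      exact ⟨s, hs, by rw [← hc]; ring⟩
    · left
      exact ⟨s, hs, by rw [← hc]; ring⟩
  · rintro (⟨s, hs, rfl⟩ | ⟨s, hs, rfl⟩) <;> simp only [Finset.mem_Icc] at hs
    · constructor
      · intro hc
        have h0 : (s : ZMod k) = 0 := by linear_combination -hc
        exact nnCycle_cast_ne_zero hs.1 (by omega) h0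
      · exact ⟨s, by simp [Finset.mem_Icc, hs], Or.inr (by ring)⟩
    · constructor
      · intro hc
        have h0 : (s : ZMod k) = 0 := by linear_combination hc
        exact nnCycle_cast_ne_zero hs.1 (by omega) h0
      · exact ⟨s, by simp [Finset.mem_Icc, hs], Or.inl (by ring)⟩

lemma nnCycle_inj_add (k r : ℕ) [NeZero k] (h : 2 * r + 1 ≤ k) (a : ZMod k) :
    Set.InjOn (fun s : ℕ => a + (s : ZMod k)) (Finset.Icc 1 r) := by
  intro s hs t ht hst
  simp only [Finset.coe_Icc, Set.mem_Icc] at hs ht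
  have h2 : a + (s : ZMod k) = a + (t : ZMod k) := hst
  have h3 : (s : ZMod k) = (t : ZMod k) := add_left_cancel h2
  have := congrArg ZMod.val h3
  rwa [ZMod.val_cast_of_lt (by omega), ZMod.val_cast_of_lt (by omega)] at this

lemma nnCycle_inj_sub (k r : ℕ) [NeZero k] (h : 2 * r + 1 ≤ k) (a : ZMod k) :
    Set.InjOn (fun s : ℕ => a - (s : ZMod k)) (Finset.Icc 1 r) := by
  intro s hs t ht hst
  simp only [Finset.coe_Icc, Set.mem_Icc] at hs ht
  have h2 : a - (s : ZMod k) = a - (t : ZMod k) := hst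
  have h3 : (s : ZMod k) = (t : ZMod k) := by linear_combination -h2
  have := congrArg ZMod.val h3
  rwa [ZMod.val_cast_of_lt (by omega), ZMod.val_cast_of_lt (by omega)] at this

lemma nnCycle_disj (k r : ℕ) [NeZero k] (h : 2 * r + 1 ≤ k) (a : ZMod k) :
    Disjoint ((Finset.Icc 1 r).image (fun s : ℕ => a + (s : ZMod k)))
      ((Finset.Icc 1 r).image (fun s : ℕ => a - (s : ZMod k))) := by
  rw [Finset.disjoint_left]
  rintro b hb hb'
  simp only [Finset.mem_image, Finset.mem_Icc] at hb hb'
  obtain ⟨s, hs, rfl⟩ := hb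
  obtain ⟨t, ht, hEq⟩ := hb'
  have h0 : ((s + t : ℕ) : ZMod k) = 0 := by
    push_cast
    linear_combination -hEq
  exact nnCycle_cast_ne_zero (by omega) (by omega) h0

lemma nnCycle_degree (k r : ℕ) [NeZero k] (hr : 1 ≤ r) (h : 2 * r + 1 ≤ k) (a : ZMod k) :
    (nnCycle k r).degree a = 2 * r := by
  rw [← card_neighborFinset_eq_degree, nnCycle_neighborFinset k r hr h a,
    Finset.card_union_of_disjoint (nnCycle_disj k r h a),
    Finset.card_image_of_injOn (nnCycle_inj_add k r h a),
    Finset.card_image_of_injOn (nnCycle_inj_sub k r h a), Nat.card_Icc]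
  omega

lemma nnCycle_val_parity_add (k : ℕ) [NeZero k] (he : Even k) (a : ZMod k) {s : ℕ}
    (hs : s < k) : (-1 : ℂ) ^ (a + (s : ZMod k)).val = (-1) ^ (a.val + s) := by
  obtain ⟨t, ht⟩ := id he
  rw [ZMod.val_add, ZMod.val_cast_of_lt hs, neg_one_pow_mod_two ((a.val + s) % k),
    neg_one_pow_mod_two (a.val + s), Nat.mod_mod_of_dvd _ (by omega)]

lemma nnCycle_val_parity_sub (k : ℕ) [NeZero k] (he : Even k) (a : ZMod k) {s : ℕ}
    (hs : 1 ≤ s) (hs' : s < k) :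
    (-1 : ℂ) ^ (a - (s : ZMod k)).val = (-1) ^ (a.val + s) := by
  obtain ⟨t, ht⟩ := id he
  have hk : ((k : ℕ) : ZMod k) = 0 := ZMod.natCast_self k
  have hrw : a - (s : ZMod k) = a + ((k - s : ℕ) : ZMod k) := by
    push_cast [Nat.cast_sub hs'.le]
    rw [hk]
    ring
  rw [hrw, nnCycle_val_parity_add k he a (by omega), neg_one_pow_mod_two (a.val + (k - s)),
    neg_one_pow_mod_two (a.val + s)]
  congr 1
  omega

lemma nnCycle_sum (k r : ℕ) [NeZero k] (he : Even k) (hr : 1 ≤ r) (h : 2 * r + 1 ≤ k)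
    (a : ZMod k) :
    ∑ b ∈ (nnCycle k r).neighborFinset a, (-1 : ℂ) ^ b.val
      = (-1) ^ a.val * ((-1) ^ r - 1) := by
  rw [nnCycle_neighborFinset k r hr h a, Finset.sum_union (nnCycle_disj k r h a),
    Finset.sum_image (nnCycle_inj_add k r h a), Finset.sum_image (nnCycle_inj_sub k r h a)]
  have e1 : ∀ s ∈ Finset.Icc 1 r, (-1 : ℂ) ^ (a + (s : ZMod k)).val
      = (-1) ^ a.val * (-1) ^ s := by
    intro s hs
    simp only [Finset.mem_Icc] at hs
    rw [nnCycle_val_parity_add k he a (by omega), pow_add]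
  have e2 : ∀ s ∈ Finset.Icc 1 r, (-1 : ℂ) ^ (a - (s : ZMod k)).val
      = (-1) ^ a.val * (-1) ^ s := by
    intro s hs
    simp only [Finset.mem_Icc] at hs
    rw [nnCycle_val_parity_sub k he a hs.1 (by omega), pow_add]
  rw [Finset.sum_congr rfl e1, Finset.sum_congr rfl e2, ← Finset.mul_sum,
    sum_neg_one_pow]
  ring

/-- For `r ≥ 1` and even `k₁, k₂` with `2r+1 ≤ k₁, k₂`, the vector `w(x,y) = (-1)^{x+y}` is
an eigenvector of the Laplacian of the torus `C_{k₁}ʳ □ C_{k₂}ʳ` with eigenvalue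
`4r + 2 - 2(-1)^r = 4r + 2 - 2cos(πr)`. -/
theorem torus_laplacian_alternating_eigenvector (r k₁ k₂ : ℕ) (hr : 1 ≤ r)
    (he₁ : Even k₁) (he₂ : Even k₂) (h₁ : 2 * r + 1 ≤ k₁) (h₂ : 2 * r + 1 ≤ k₂) :
    haveI : NeZero k₁ := ⟨by omega⟩
    haveI : NeZero k₂ := ⟨by omega⟩
    (4 * (r : ℝ) + 2 - 2 * (-1 : ℝ) ^ r = 4 * r + 2 - 2 * Real.cos (Real.pi * r)) ∧
    (nnCycle k₁ r □ nnCycle k₂ r).lapMatrix ℂ *ᵥ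
        (fun p : ZMod k₁ × ZMod k₂ => (-1 : ℂ) ^ (p.1.val + p.2.val)) =
      ((4 * r + 2 - 2 * (-1 : ℝ) ^ r : ℝ) : ℂ) •
        (fun p : ZMod k₁ × ZMod k₂ => (-1 : ℂ) ^ (p.1.val + p.2.val)) := by
  haveI : NeZero k₁ := ⟨by omega⟩
  haveI : NeZero k₂ := ⟨by omega⟩
  refine ⟨?_, ?_⟩
  · have hc : Real.cos (Real.pi * r) = (-1 : ℝ) ^ r := by
      rw [mul_comm]
      simpa using Real.cos_add_nat_mul_pi 0 r
    rw [hc]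
  · funext p
    obtain ⟨x, y⟩ := p
    rw [lapMatrix_mulVec_apply, degree_boxProd, neighborFinset_boxProd,
      Finset.sum_disjUnion, Finset.sum_product, Finset.sum_product]
    have hdx := nnCycle_degree k₁ r hr h₁ x
    have hdy := nnCycle_degree k₂ r hr h₂ y
    have hsx := nnCycle_sum k₁ r he₁ hr h₁ x
    have hsy := nnCycle_sum k₂ r he₂ hr h₂ y
    simp only [Finset.sum_singleton, Pi.smul_apply, smul_eq_mul, pow_add]
    rw [← Finset.sum_mul, ← Finset.mul_sum, hsx, hsy, hdx, hdy]
    push_cast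
    ring
end
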